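/- For arbitrary finite simple graphs G₁ and G₂, the decycling number of their Cartesian product satisfies ∇(G₁ □ G₂) ≥ α'(G₁)·α'(G₂), where α' denotes the matching number. -/

import Mathlib

open SimpleGraph

/-- The star `S_m = K_{1,m-1}` on `m` vertices, with center the vertex `0`. -/
def starGraph (m : ℕ) : SimpleGraph (Fin m) where
  Adj i j := i ≠ j ∧ (i.val = 0 ∨ j.val = 0)
  symm := ⟨fun _ _ h => ⟨h.1.symm, h.2.symm⟩⟩
  loopless := ⟨fun _ h => h.1 rfl⟩

/-- The decycling number: the minimum size of a set of vertices whose removal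
leaves an acyclic graph. -/
noncomputable def decyclingNumber {V : Type*} [Fintype V] (G : SimpleGraph V) : ℕ :=
  sInf {k | ∃ S : Finset V, S.card = k ∧ (G.induce ((↑S : Set V)ᶜ)).IsAcyclic}

/-- The forest number: the maximum size of a set of vertices inducing a forest. -/
noncomputable def forestNumber {V : Type*} [Fintype V] (G : SimpleGraph V) : ℕ :=
  sSup {k | ∃ S : Finset V, S.card = k ∧ (G.induce (↑S : Set V)).IsAcyclic}

/-- The matching number: the maximum size of a set of pairwise non-incident edges. -/
noncomputable def matchingNumber {V : Type*} [Fintype V] (G : SimpleGraph V) : ℕ :=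
  sSup {k | ∃ M : Finset (Sym2 V), ↑M ⊆ G.edgeSet ∧
    (M : Set (Sym2 V)).Pairwise (fun e f => ∀ v, ¬(v ∈ e ∧ v ∈ f)) ∧ M.card = k}

lemma exists_hit {V₁ V₂ : Type*} [Fintype V₁] [Fintype V₂]
    (G₁ : SimpleGraph V₁) (G₂ : SimpleGraph V₂)
    (S : Finset (V₁ × V₂))
    (hS : ((G₁.boxProd G₂).induce ((↑S : Set (V₁ × V₂))ᶜ)).IsAcyclic)
    (e₁ : Sym2 V₁) (e₂ : Sym2 V₂)
    (h₁ : e₁ ∈ G₁.edgeSet) (h₂ : e₂ ∈ G₂.edgeSet) :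
    ∃ p : V₁ × V₂, p ∈ S ∧ p.1 ∈ e₁ ∧ p.2 ∈ e₂ := by
  induction e₁ using Sym2.ind with | _ x y =>
  induction e₂ using Sym2.ind with | _ u v =>
  rw [mem_edgeSet] at h₁ h₂
  by_contra hcon
  push_neg at hcon
  have ha : ((x, u) : V₁ × V₂) ∉ S := fun hm => by simpa using hcon _ hm
  have hb : ((y, u) : V₁ × V₂) ∉ S := fun hm => by simpa using hcon _ hm
  have hc : ((y, v) : V₁ × V₂) ∉ S := fun hm => by simpa using hcon _ hm
  have hd : ((x, v) : V₁ × V₂) ∉ S := fun hm => by simpa using hcon _ hm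
  set T : Set (V₁ × V₂) := (↑S : Set (V₁ × V₂))ᶜ with hT
  set H := (G₁.boxProd G₂).induce T with hH
  let A : T := ⟨(x, u), ha⟩
  let B : T := ⟨(y, u), hb⟩
  let C : T := ⟨(y, v), hc⟩
  let D : T := ⟨(x, v), hd⟩
  have hab : H.Adj A B := by
    show (G₁.boxProd G₂).Adj (x, u) (y, u); exact Or.inl ⟨h₁, rfl⟩
  have hbc : H.Adj B C := by
    show (G₁.boxProd G₂).Adj (y, u) (y, v); exact Or.inr ⟨h₂, rfl⟩
  have hcd : H.Adj C D := by
    show (G₁.boxProd G₂).Adj (y, v) (x, v); exact Or.inl ⟨h₁.symm, rfl⟩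
  have hda : H.Adj D A := by
    show (G₁.boxProd G₂).Adj (x, v) (x, u); exact Or.inr ⟨h₂.symm, rfl⟩
  have hxy : x ≠ y := h₁.ne
  have huv : u ≠ v := h₂.ne
  refine hS (Walk.cons hab (Walk.cons hbc (Walk.cons hcd (Walk.cons hda Walk.nil)))) ?_
  constructor
  · constructor
    · simp [Walk.isTrail_def, Sym2.eq_iff, Subtype.ext_iff, Prod.ext_iff, A, B, C, D]
      tauto
    · simp
  · simp [Subtype.ext_iff, Prod.ext_iff, A, B, C, D]
    tauto

lemma count_le {V₁ V₂ : Type*} [Fintype V₁] [Fintype V₂]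
    (G₁ : SimpleGraph V₁) (G₂ : SimpleGraph V₂)
    (M₁ : Finset (Sym2 V₁)) (M₂ : Finset (Sym2 V₂))
    (hs₁ : ↑M₁ ⊆ G₁.edgeSet) (hs₂ : ↑M₂ ⊆ G₂.edgeSet)
    (hp₁ : (M₁ : Set (Sym2 V₁)).Pairwise (fun e f => ∀ v, ¬(v ∈ e ∧ v ∈ f)))
    (hp₂ : (M₂ : Set (Sym2 V₂)).Pairwise (fun e f => ∀ v, ¬(v ∈ e ∧ v ∈ f)))
    (S : Finset (V₁ × V₂))
    (hS : ((G₁.boxProd G₂).induce ((↑S : Set (V₁ × V₂))ᶜ)).IsAcyclic) :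
    M₁.card * M₂.card ≤ S.card := by
  classical
  rcases (M₁ ×ˢ M₂).eq_empty_or_nonempty with he | hne
  · have : M₁.card * M₂.card = 0 := by
      rw [← Finset.card_product, he, Finset.card_empty]
    omega
  · obtain ⟨q₀, hq₀⟩ := hne
    have hex : ∀ q ∈ M₁ ×ˢ M₂, ∃ p : V₁ × V₂, p ∈ S ∧ p.1 ∈ q.1 ∧ p.2 ∈ q.2 := by
      intro q hq
      rw [Finset.mem_product] at hq
      exact exists_hit G₁ G₂ S hS q.1 q.2 (hs₁ hq.1) (hs₂ hq.2)
    obtain ⟨p₀, -, -, -⟩ := hex q₀ hq₀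
    haveI : Nonempty (V₁ × V₂) := ⟨p₀⟩
    set f : Sym2 V₁ × Sym2 V₂ → V₁ × V₂ := fun q =>
      if h : ∃ p : V₁ × V₂, p ∈ S ∧ p.1 ∈ q.1 ∧ p.2 ∈ q.2 then h.choose
      else Classical.arbitrary _ with hf
    rw [← Finset.card_product]
    apply Finset.card_le_card_of_injOn f
    · intro q hq
      have h := hex q hq
      simp only [hf, dif_pos h]
      exact h.choose_spec.1
    · intro q hq q' hq' hfq
      have h := hex q hq
      have h' := hex q' hq'
      simp only [hf, dif_pos h, dif_pos h'] at hfq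
      obtain ⟨-, hm1, hm2⟩ := h.choose_spec
      obtain ⟨-, hm1', hm2'⟩ := h'.choose_spec
      rw [hfq] at hm1 hm2
      rw [Finset.mem_coe, Finset.mem_product] at hq hq'
      have e1 : q.1 = q'.1 := by
        by_contra hne1
        exact hp₁ (Finset.mem_coe.mpr hq.1) (Finset.mem_coe.mpr hq'.1) hne1 _ ⟨hm1, hm1'⟩
      have e2 : q.2 = q'.2 := by
        by_contra hne2
        exact hp₂ (Finset.mem_coe.mpr hq.2) (Finset.mem_coe.mpr hq'.2) hne2 _ ⟨hm2, hm2'⟩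
      exact Prod.ext e1 e2

theorem decycling_boxProd_ge_matching_mul
    {V₁ V₂ : Type*} [Fintype V₁] [Fintype V₂]
    (G₁ : SimpleGraph V₁) (G₂ : SimpleGraph V₂) :
    matchingNumber G₁ * matchingNumber G₂ ≤ decyclingNumber (G₁.boxProd G₂) := by
  classical
  -- the decycling set family is nonempty (take all vertices)
  have hdne : {k | ∃ S : Finset (V₁ × V₂), S.card = k ∧
      ((G₁.boxProd G₂).induce ((↑S : Set (V₁ × V₂))ᶜ)).IsAcyclic}.Nonempty := by
    refine ⟨(Finset.univ : Finset (V₁ × V₂)).card, Finset.univ, rfl, ?_⟩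
    intro v c _
    exact absurd v.2 (by simp)
  obtain ⟨Sd, hScard, hAc⟩ := Nat.sInf_mem hdne
  -- matchings achieving the matching numbers
  have hm₁ : matchingNumber G₁ ∈ {k | ∃ M : Finset (Sym2 V₁), ↑M ⊆ G₁.edgeSet ∧
      (M : Set (Sym2 V₁)).Pairwise (fun e f => ∀ v, ¬(v ∈ e ∧ v ∈ f)) ∧ M.card = k} := by
    apply Nat.sSup_mem
    · exact ⟨0, ∅, by simp, by simp, by simp⟩
    · refine ⟨Fintype.card (Sym2 V₁), ?_⟩
      rintro k ⟨M, -, -, rfl⟩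
      exact Finset.card_le_univ M
  have hm₂ : matchingNumber G₂ ∈ {k | ∃ M : Finset (Sym2 V₂), ↑M ⊆ G₂.edgeSet ∧
      (M : Set (Sym2 V₂)).Pairwise (fun e f => ∀ v, ¬(v ∈ e ∧ v ∈ f)) ∧ M.card = k} := by
    apply Nat.sSup_mem
    · exact ⟨0, ∅, by simp, by simp, by simp⟩
    · refine ⟨Fintype.card (Sym2 V₂), ?_⟩
      rintro k ⟨M, -, -, rfl⟩
      exact Finset.card_le_univ M
  obtain ⟨M₁, hs₁, hp₁, hc₁⟩ := hm₁
  obtain ⟨M₂, hs₂, hp₂, hc₂⟩ := hm₂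
  have : M₁.card * M₂.card ≤ Sd.card :=
    count_le G₁ G₂ M₁ M₂ hs₁ hs₂ hp₁ hp₂ Sd hAc
  rw [hc₁, hc₂, hScard] at this
  exact this
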